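/- Every (n-2)-filiform complex nilpotent Lie algebra of dimension n is isomorphic to the direct sum of a Heisenberg Lie algebra H_{2p+1} (of dimension 2p+1 for some p ≥ 1) and an abelian Lie algebra. -/

import Mathlib

open Module Submodule

universe u

private lemma omega_skew {V : Type u} [AddCommGroup V] [Module ℂ V]
    (ω : V →ₗ[ℂ] V →ₗ[ℂ] ℂ) (halt : ∀ v, ω v v = 0) (u v : V) : ω u v = -ω v u := by
  have h := halt (u + v)
  simp only [map_add, LinearMap.add_apply, halt] at h
  linear_combination h

private lemma sb_triv {V : Type u} [AddCommGroup V] [Module ℂ V] [FiniteDimensional ℂ V]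
    (ω : V →ₗ[ℂ] V →ₗ[ℂ] ℂ) (h0 : ∀ v w, ω v w = 0) :
    ∃ (p q : ℕ) (b : Basis (Fin p ⊕ Fin p ⊕ Fin q) ℂ V),
      (∀ i j, ω (b (.inl i)) (b (.inr (.inl j))) = if i = j then 1 else 0) ∧
      (∀ i j, ω (b (.inl i)) (b (.inl j)) = 0) ∧
      (∀ i j, ω (b (.inr (.inl i))) (b (.inr (.inl j))) = 0) ∧
      (∀ v k, ω v (b (.inr (.inr k))) = 0) := by
  refine ⟨0, finrank ℂ V,
    (Module.finBasis ℂ V).reindex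
      (((Equiv.emptySum (Fin 0) (Fin 0 ⊕ Fin (finrank ℂ V))).trans
        (Equiv.emptySum (Fin 0) (Fin (finrank ℂ V)))).symm),
    fun i => i.elim0, fun i => i.elim0, fun i => i.elim0, fun v k => h0 _ _⟩

private lemma sb (n : ℕ) : ∀ (V : Type u) [AddCommGroup V] [Module ℂ V] [FiniteDimensional ℂ V],
    finrank ℂ V ≤ n → ∀ (ω : V →ₗ[ℂ] V →ₗ[ℂ] ℂ), (∀ v, ω v v = 0) →
    ∃ (p q : ℕ) (b : Basis (Fin p ⊕ Fin p ⊕ Fin q) ℂ V),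
      (∀ i j, ω (b (.inl i)) (b (.inr (.inl j))) = if i = j then 1 else 0) ∧
      (∀ i j, ω (b (.inl i)) (b (.inl j)) = 0) ∧
      (∀ i j, ω (b (.inr (.inl i))) (b (.inr (.inl j))) = 0) ∧
      (∀ v k, ω v (b (.inr (.inr k))) = 0) := by
  induction n with
  | zero =>
    intro V _ _ _ hrank ω halt
    refine sb_triv ω fun v w => ?_
    have : Subsingleton V := finrank_zero_iff.mp (Nat.le_zero.mp hrank)
    rw [Subsingleton.elim v 0]; simp
  | succ n IH =>
    intro V _ _ _ hrank ω halt
    by_cases h0 : ∀ v w, ω v w = 0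
    · exact sb_triv ω h0
    push_neg at h0
    obtain ⟨x, y, hxy⟩ := h0
    have hskew : ∀ u v : V, ω u v = -ω v u := omega_skew ω halt
    set X1 : V := x with hX1
    set Y1 : V := (ω x y)⁻¹ • y with hY1
    have hω1 : ω X1 Y1 = 1 := by
      simp only [hY1, map_smul, smul_eq_mul]
      field_simp
      rw [hX1] at hxy; exact div_self hxy
    set V' : Submodule ℂ V := LinearMap.ker (ω X1) ⊓ LinearMap.ker (ω Y1) with hV'
    have hmemV' : ∀ v : V, v ∈ V' ↔ ω X1 v = 0 ∧ ω Y1 v = 0 := by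
      intro v; simp [hV', LinearMap.mem_ker]
    have hX1V' : X1 ∉ V' := by
      intro h
      have h2 := ((hmemV' _).1 h).2
      rw [hskew Y1 X1, hω1] at h2
      norm_num at h2
    have hrank' : finrank ℂ V' ≤ n := by
      have : V' < ⊤ := lt_top_iff_ne_top.mpr (fun h => hX1V' (h ▸ mem_top))
      have := Submodule.finrank_lt (K := ℂ) (V := V) this.ne
      omega
    obtain ⟨p, q, b', hb1, hb2, hb3, hb4⟩ :=
      IH V' hrank' (ω.compl₁₂ V'.subtype V'.subtype) (fun v => halt v)
    -- decomposition
    have hdecomp : ∀ v : V, v - (ω X1 v) • Y1 + (ω Y1 v) • X1 ∈ V' := by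
      intro v
      rw [hmemV']
      constructor
      · simp only [map_sub, map_add, map_smul, smul_eq_mul, halt, hω1]
        ring
      · have hY1X1 : ω Y1 X1 = -1 := by rw [hskew Y1 X1, hω1]
        simp only [map_sub, map_add, map_smul, smul_eq_mul, halt, hY1X1]
        ring
    -- the span of X1, Y1
    set P : Submodule ℂ V := span ℂ (Set.range ![X1, Y1]) with hP
    have hX1P : X1 ∈ P := subset_span ⟨0, rfl⟩
    have hY1P : Y1 ∈ P := subset_span ⟨1, rfl⟩
    have hcompl : IsCompl P V' := by
      constructor
      · rw [disjoint_def]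
        intro v hvP hvV'
        obtain ⟨c, hc⟩ := (mem_span_range_iff_exists_fun ℂ).mp hvP
        rw [Fin.sum_univ_two] at hc
        simp only [Matrix.cons_val_zero, Matrix.cons_val_one, Matrix.head_cons] at hc
        obtain ⟨h1, h2⟩ := (hmemV' v).1 hvV'
        rw [← hc] at h1 h2
        have hY1X1 : ω Y1 X1 = -1 := by rw [hskew Y1 X1, hω1]
        simp only [map_add, map_smul, smul_eq_mul, halt, hω1, hY1X1] at h1 h2
        have hc0 : c 0 = 0 := by linear_combination -h2
        have hc1 : c 1 = 0 := by linear_combination h1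
        rw [← hc, hc0, hc1]; simp
      · rw [codisjoint_iff, eq_top_iff]
        rintro v -
        have : v = ((ω X1 v) • Y1 - (ω Y1 v) • X1) + (v - (ω X1 v) • Y1 + (ω Y1 v) • X1) := by
          abel
        rw [this]
        exact Submodule.add_mem _
          (Submodule.mem_sup_left (sub_mem (smul_mem _ _ hY1P) (smul_mem _ _ hX1P)))
          (Submodule.mem_sup_right (hdecomp v))
    have hindep : LinearIndependent ℂ ![X1, Y1] := by
      rw [LinearIndependent.pair_iff]
      intro s t hst
      have h1 : ω X1 (s • X1 + t • Y1) = t := by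
        simp [map_add, map_smul, halt, hω1]
      have h2 : ω Y1 (s • X1 + t • Y1) = -s := by
        have hY1X1 : ω Y1 X1 = -1 := by rw [hskew Y1 X1, hω1]
        simp only [map_add, map_smul, smul_eq_mul, halt, hY1X1]
        ring
      rw [hst] at h1 h2
      simp only [map_zero] at h1 h2
      exact ⟨by linear_combination h2, by linear_combination -h1⟩
    set bP : Basis (Fin 2) ℂ P := Basis.span hindep with hbP
    set bV : Basis (Fin 2 ⊕ (Fin p ⊕ Fin p ⊕ Fin q)) ℂ V :=
      (bP.prod b').map (Submodule.prodEquivOfIsCompl P V' hcompl) with hbV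
    have hbVl : ∀ i : Fin 2, bV (Sum.inl i) = ![X1, Y1] i := by
      intro i
      simp only [hbV, Basis.map_apply, Basis.prod_apply, Sum.elim_inl,
        LinearMap.coe_inl, Submodule.coe_prodEquivOfIsCompl', Function.comp_apply]
      simp [hbP, Module.Basis.span_apply hindep i]
    have hbVr : ∀ j, bV (Sum.inr j) = (b' j : V) := by
      intro j
      simp [hbV, Basis.prod_apply]
    -- reindexing equivalence
    let e : (Fin 2 ⊕ (Fin p ⊕ Fin p ⊕ Fin q)) ≃ (Fin (p+1) ⊕ Fin (p+1) ⊕ Fin q) :=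
      { toFun := Sum.elim ![Sum.inl 0, Sum.inr (Sum.inl 0)]
          (Sum.elim (fun i => Sum.inl i.succ)
            (Sum.elim (fun j => Sum.inr (Sum.inl j.succ)) (fun k => Sum.inr (Sum.inr k))))
        invFun := Sum.elim
            (fun i => Fin.cases (Sum.inl 0) (fun i' => Sum.inr (Sum.inl i')) i)
          (Sum.elim
            (fun j => Fin.cases (Sum.inl 1) (fun j' => Sum.inr (Sum.inr (Sum.inl j'))) j)
            (fun k => Sum.inr (Sum.inr (Sum.inr k))))
        left_inv := by
          rintro (i | (i | (j | k)))
          · fin_cases i <;> simp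
          · simp
          · simp
          · simp
        right_inv := by
          rintro (i | (j | k))
          · refine Fin.cases ?_ ?_ i <;> simp
          · refine Fin.cases ?_ ?_ j <;> simp
          · simp }
    set bfin := bV.reindex e with hbfin
    have hbX0 : bfin (Sum.inl 0) = X1 := by
      rw [hbfin, Basis.reindex_apply, show e.symm (Sum.inl 0) = Sum.inl 0 from
        e.symm_apply_eq.mpr (by simp [e]), hbVl]
      simp
    have hbXs : ∀ i : Fin p, bfin (Sum.inl i.succ) = (b' (Sum.inl i) : V) := by
      intro i
      rw [hbfin, Basis.reindex_apply, show e.symm (Sum.inl i.succ) = Sum.inr (Sum.inl i) from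
        e.symm_apply_eq.mpr (by simp [e]), hbVr]
    have hbY0 : bfin (Sum.inr (Sum.inl 0)) = Y1 := by
      rw [hbfin, Basis.reindex_apply, show e.symm (Sum.inr (Sum.inl 0)) = Sum.inl 1 from
        e.symm_apply_eq.mpr (by simp [e]), hbVl]
      simp
    have hbYs : ∀ j : Fin p, bfin (Sum.inr (Sum.inl j.succ)) = (b' (Sum.inr (Sum.inl j)) : V) := by
      intro j
      rw [hbfin, Basis.reindex_apply,
        show e.symm (Sum.inr (Sum.inl j.succ)) = Sum.inr (Sum.inr (Sum.inl j)) from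
        e.symm_apply_eq.mpr (by simp [e]), hbVr]
    have hbW : ∀ k : Fin q, bfin (Sum.inr (Sum.inr k)) = (b' (Sum.inr (Sum.inr k)) : V) := by
      intro k
      rw [hbfin, Basis.reindex_apply,
        show e.symm (Sum.inr (Sum.inr k)) = Sum.inr (Sum.inr (Sum.inr k)) from
        e.symm_apply_eq.mpr (by simp [e]), hbVr]
    have hmemb : ∀ idx, ((b' idx : V) ∈ V') := fun idx => (b' idx).2
    refine ⟨p + 1, q, bfin, ?_, ?_, ?_, ?_⟩
    · intro i j
      induction i using Fin.cases with
      | zero =>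
        induction j using Fin.cases with
        | zero => rw [hbX0, hbY0, hω1, if_pos rfl]
        | succ j' =>
          rw [hbX0, hbYs, ((hmemV' _).1 (hmemb (Sum.inr (Sum.inl j')))).1,
            if_neg (Ne.symm (Fin.succ_ne_zero j'))]
      | succ i' =>
        induction j using Fin.cases with
        | zero =>
          rw [hbXs, hbY0, hskew, ((hmemV' _).1 (hmemb (Sum.inl i'))).2, neg_zero,
            if_neg (Fin.succ_ne_zero i')]
        | succ j' =>
          rw [hbXs, hbYs]
          have h := hb1 i' j'
          simp only [Fin.succ_inj]
          exact h
    · intro i j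
      induction i using Fin.cases with
      | zero =>
        induction j using Fin.cases with
        | zero => rw [hbX0]; exact halt X1
        | succ j' => rw [hbX0, hbXs]; exact ((hmemV' _).1 (hmemb (Sum.inl j'))).1
      | succ i' =>
        induction j using Fin.cases with
        | zero => rw [hbXs, hbX0, hskew, ((hmemV' _).1 (hmemb (Sum.inl i'))).1, neg_zero]
        | succ j' => rw [hbXs, hbXs]; exact hb2 i' j'
    · intro i j
      induction i using Fin.cases with
      | zero =>
        induction j using Fin.cases with
        | zero => rw [hbY0]; exact halt Y1
        | succ j' => rw [hbY0, hbYs]; exact ((hmemV' _).1 (hmemb (Sum.inr (Sum.inl j')))).2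
      | succ i' =>
        induction j using Fin.cases with
        | zero => rw [hbYs, hbY0, hskew, ((hmemV' _).1 (hmemb (Sum.inr (Sum.inl i')))).2, neg_zero]
        | succ j' => rw [hbYs, hbYs]; exact hb3 i' j'
    · intro v k
      rw [hbW]
      have hwV' := hmemb (Sum.inr (Sum.inr k))
      have hw1 : ω X1 (b' (Sum.inr (Sum.inr k)) : V) = 0 := ((hmemV' _).1 hwV').1
      have hw2 : ω Y1 (b' (Sum.inr (Sum.inr k)) : V) = 0 := ((hmemV' _).1 hwV').2
      have h4 : ω (v - (ω X1 v) • Y1 + (ω Y1 v) • X1) (b' (Sum.inr (Sum.inr k)) : V) = 0 :=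
        hb4 ⟨_, hdecomp v⟩ k
      have hexp : ω v (b' (Sum.inr (Sum.inr k)) : V) =
          ω (v - (ω X1 v) • Y1 + (ω Y1 v) • X1) (b' (Sum.inr (Sum.inr k)) : V)
            + (ω X1 v) * ω Y1 (b' (Sum.inr (Sum.inr k)) : V)
            - (ω Y1 v) * ω X1 (b' (Sum.inr (Sum.inr k)) : V) := by
        simp only [map_add, map_sub, map_smul, LinearMap.add_apply, LinearMap.sub_apply,
          LinearMap.smul_apply, smul_eq_mul]
        ring
      rw [hexp, h4, hw1, hw2]
      ring


private lemma pair_indep {V : Type u} [AddCommGroup V] [Module ℂ V] {Z W : V} (hZ : Z ≠ 0)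
    (hW : W ∉ span ℂ {Z}) {α β γ δ : ℂ} (hdet : α * δ - β * γ ≠ 0) :
    LinearIndependent ℂ ![α • Z + β • W, γ • Z + δ • W] := by
  have hpair : LinearIndependent ℂ ![Z, W] := by
    rw [LinearIndependent.pair_iff]
    intro s t hst
    by_cases ht : t = 0
    · subst ht
      simp only [zero_smul, add_zero] at hst
      exact ⟨(smul_eq_zero.mp hst).resolve_right hZ, rfl⟩
    · exfalso
      apply hW
      rw [mem_span_singleton]
      refine ⟨-(t⁻¹ * s), ?_⟩
      have h1 : t • W = -(s • Z) := eq_neg_of_add_eq_zero_right hst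
      have h2 : t⁻¹ • (t • W) = t⁻¹ • (-(s • Z)) := congrArg _ h1
      rw [smul_smul, inv_mul_cancel₀ ht, one_smul] at h2
      rw [h2, smul_neg, smul_smul, ← neg_smul]
  rw [LinearIndependent.pair_iff]
  intro s t hst
  have h2 : (s * α + t * γ) • Z + (s * β + t * δ) • W
      = s • (α • Z + β • W) + t • (γ • Z + δ • W) := by module
  rw [hst] at h2
  obtain ⟨h3, h4⟩ := LinearIndependent.pair_iff.mp hpair _ _ h2
  constructor
  · have h5 : s * (α * δ - β * γ) = 0 := by linear_combination δ * h3 - γ * h4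
    exact (mul_eq_zero.mp h5).resolve_right hdet
  · have h5 : t * (α * δ - β * γ) = 0 := by linear_combination α * h4 - β * h3
    exact (mul_eq_zero.mp h5).resolve_right hdet

private lemma two_le_finrank_of_pair {V : Type u} [AddCommGroup V] [Module ℂ V]
    [FiniteDimensional ℂ V] {S : Submodule ℂ V} {v1 v2 : V} (h1 : v1 ∈ S) (h2 : v2 ∈ S)
    (hind : LinearIndependent ℂ ![v1, v2]) : 2 ≤ finrank ℂ S := by
  have hle : span ℂ (Set.range ![v1, v2]) ≤ S := by
    rw [span_le]
    rintro _ ⟨i, rfl⟩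
    fin_cases i <;> simpa
  have h2' : finrank ℂ (span ℂ (Set.range ![v1, v2])) = 2 := by
    rw [finrank_span_eq_card hind]
    simp
  calc 2 = finrank ℂ (span ℂ (Set.range ![v1, v2])) := h2'.symm
    _ ≤ finrank ℂ S := Submodule.finrank_mono hle

/-- Every `(n-2)`-filiform complex nilpotent Lie algebra (characteristic sequence
`(2,1,...,1)`, i.e. every `ad X` for `X` outside the derived algebra squares to zero and
has rank at most one, and some such `ad X` is nonzero) is isomorphic to the direct sum of
a Heisenberg algebra `H_{2p+1}` (`p ≥ 1`) and an abelian Lie algebra; equivalently it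
admits a basis `X_1,...,X_p, Y_1,...,Y_p, Z, W_1,...,W_q` with `⁅X_i, Y_i⁆ = Z`, all other
brackets of basis vectors zero, and the `W_k` central. -/
theorem n_sub_two_filiform_classification (g : Type*) [LieRing g] [LieAlgebra ℂ g]
    [FiniteDimensional ℂ g] [LieRing.IsNilpotent g]
    (hmax : ∀ X : g, X ∉ LieAlgebra.derivedSeries ℂ g 1 →
      (LieAlgebra.ad ℂ g X) ^ 2 = 0 ∧
        Module.finrank ℂ (LinearMap.range (LieAlgebra.ad ℂ g X)) ≤ 1)
    (hex : ∃ X : g, X ∉ LieAlgebra.derivedSeries ℂ g 1 ∧ LieAlgebra.ad ℂ g X ≠ 0) :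
    ∃ (p q : ℕ), 1 ≤ p ∧ Module.finrank ℂ g = 2 * p + 1 + q ∧
      ∃ b : Basis (Fin p ⊕ Fin p ⊕ Unit ⊕ Fin q) ℂ g,
        (∀ i : Fin p,
          ⁅b (Sum.inl i), b (Sum.inr (Sum.inl i))⁆ = b (Sum.inr (Sum.inr (Sum.inl ())))) ∧
        (∀ i j : Fin p, i ≠ j → ⁅b (Sum.inl i), b (Sum.inr (Sum.inl j))⁆ = 0) ∧
        (∀ i j : Fin p, ⁅b (Sum.inl i), b (Sum.inl j)⁆ = 0) ∧
        (∀ i j : Fin p, ⁅b (Sum.inr (Sum.inl i)), b (Sum.inr (Sum.inl j))⁆ = 0) ∧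
        (∀ i : Fin p, ⁅b (Sum.inl i), b (Sum.inr (Sum.inr (Sum.inl ())))⁆ = 0) ∧
        (∀ i : Fin p, ⁅b (Sum.inr (Sum.inl i)), b (Sum.inr (Sum.inr (Sum.inl ())))⁆ = 0) ∧
        (∀ (x : g) (k : Fin q), ⁅x, b (Sum.inr (Sum.inr (Sum.inr k)))⁆ = 0) := by
  classical
  obtain ⟨X, hXD, hX0⟩ := hex
  set D := LieAlgebra.derivedSeries ℂ g 1 with hD
  -- square zero expressed via brackets
  have hsq : ∀ Y : g, Y ∉ D → ∀ W : g, ⁅Y, ⁅Y, W⁆⁆ = 0 := by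
    intro Y hY W
    have h := (hmax Y hY).1
    have h2 := congrArg (fun f : Module.End ℂ g => f W) h
    simpa [pow_two, Module.End.mul_apply, LieAlgebra.ad_apply] using h2
  have hnotD : ∀ {a b : g}, a ∉ D → b ∈ D → a + b ∉ D := by
    intro a b ha hb hab
    exact ha (by simpa using D.sub_mem hab hb)
  have hchoice : ∀ Y : g, ∃ t : ℂ, t ≠ 0 ∧ X + t • Y ∉ D := by
    intro Y
    by_cases hY : X + Y ∈ D
    · refine ⟨2, two_ne_zero, fun h => ?_⟩
      have hYD : Y ∈ D := by
        have := D.sub_mem h hY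
        have h2 : X + (2 : ℂ) • Y - (X + Y) = Y := by
          rw [two_smul]; abel
        rwa [h2] at this
      have hXY : X + Y - Y = X := by abel
      exact hXD (by rw [← hXY]; exact D.sub_mem hY hYD)
    · exact ⟨1, one_ne_zero, by simpa⟩
  -- lines
  have hline : ∀ Y : g, Y ∉ D → LieAlgebra.ad ℂ g Y ≠ 0 →
      ∃ W : g, W ≠ 0 ∧ LinearMap.range (LieAlgebra.ad ℂ g Y) = span ℂ {W} := by
    intro Y hYD hY0
    have hne : LinearMap.range (LieAlgebra.ad ℂ g Y) ≠ ⊥ := by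
      simpa [LinearMap.range_eq_bot] using hY0
    obtain ⟨W, hWmem, hW0⟩ := (Submodule.ne_bot_iff _).mp hne
    refine ⟨W, hW0, ?_⟩
    have hle : span ℂ {W} ≤ LinearMap.range (LieAlgebra.ad ℂ g Y) :=
      span_le.mpr (by simpa using hWmem)
    refine (Submodule.eq_of_le_of_finrank_le hle ?_).symm
    rw [finrank_span_singleton hW0]
    exact (hmax Y hYD).2
  obtain ⟨Z, hZ0, hZr⟩ := hline X hXD hX0
  have hZmemr : Z ∈ LinearMap.range (LieAlgebra.ad ℂ g X) := by
    rw [hZr]; exact mem_span_singleton_self Z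
  obtain ⟨U, hU⟩ := hZmemr
  rw [LieAlgebra.ad_apply] at hU
  -- anticommutation
  have hanti : ∀ Y : g, Y ∉ D → ∀ W : g, ⁅X, ⁅Y, W⁆⁆ + ⁅Y, ⁅X, W⁆⁆ = 0 := by
    intro Y hY W
    obtain ⟨t, ht0, htD⟩ := hchoice Y
    have hexp : ⁅X + t • Y, ⁅X + t • Y, W⁆⁆ =
        ⁅X, ⁅X, W⁆⁆ + t • (⁅X, ⁅Y, W⁆⁆ + ⁅Y, ⁅X, W⁆⁆) + (t * t) • ⁅Y, ⁅Y, W⁆⁆ := by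
      simp only [lie_add, add_lie, lie_smul, smul_lie, smul_add, smul_smul]
      abel
    rw [hsq _ htD W, hsq X hXD W, hsq Y hY W, smul_zero, add_zero, zero_add] at hexp
    exact (smul_eq_zero.mp hexp.symm).resolve_left ht0
  -- Z is central
  have hXZ : ⁅X, Z⁆ = 0 := by rw [← hU]; exact hsq X hXD U
  have hcent' : ∀ Y : g, Y ∉ D → ⁅Y, Z⁆ = 0 := by
    intro Y hY
    have h1 : ⁅Y, Z⁆ ∈ span ℂ {Z} := by
      have h2 : ⁅Y, ⁅X, U⁆⁆ = -⁅X, ⁅Y, U⁆⁆ := eq_neg_of_add_eq_zero_right (hanti Y hY U)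
      have h3 : ⁅Y, Z⁆ = -⁅X, ⁅Y, U⁆⁆ := by rw [← hU]; exact h2
      rw [h3, ← hZr]
      exact neg_mem ⟨⁅Y, U⁆, by simp [LieAlgebra.ad_apply]⟩
    obtain ⟨c, hc⟩ := mem_span_singleton.mp h1
    have h3 : ⁅Y, ⁅Y, Z⁆⁆ = 0 := hsq Y hY Z
    rw [← hc, lie_smul, ← hc, smul_smul] at h3
    rcases smul_eq_zero.mp h3 with h | h
    · rw [← hc, mul_self_eq_zero.mp h, zero_smul]
    · exact absurd h hZ0
  have hcent : ∀ Y : g, ⁅Y, Z⁆ = 0 := by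
    intro Y
    by_cases hY : Y ∈ D
    · have hXY : X + Y ∉ D := hnotD hXD hY
      have : ⁅X + Y, Z⁆ = 0 := hcent' _ hXY
      rw [add_lie, hXZ, zero_add] at this
      exact this
    · exact hcent' Y hY
  -- everything brackets into the line of Z
  have hspan' : ∀ Y : g, Y ∉ D → ∀ B : g, ⁅Y, B⁆ ∈ span ℂ {Z} := by
    intro Y hYD B
    by_cases hY0 : LieAlgebra.ad ℂ g Y = 0
    · have : ⁅Y, B⁆ = 0 := by
        have := congrArg (fun f : Module.End ℂ g => f B) hY0
        simpa [LieAlgebra.ad_apply] using this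
      rw [this]; exact zero_mem _
    obtain ⟨ZY, hZY0, hZYr⟩ := hline Y hYD hY0
    have hmem : ⁅Y, B⁆ ∈ span ℂ {ZY} := by
      rw [← hZYr]; exact ⟨B, by simp [LieAlgebra.ad_apply]⟩
    suffices h : ZY ∈ span ℂ {Z} by
      exact span_le.mpr (by simpa using h) hmem
    by_contra hZY
    obtain ⟨V, hV⟩ : ∃ V, ⁅Y, V⁆ = ZY := by
      have : ZY ∈ LinearMap.range (LieAlgebra.ad ℂ g Y) := by
        rw [hZYr]; exact mem_span_singleton_self ZY
      obtain ⟨V, hV⟩ := this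
      exact ⟨V, by rw [← hV, LieAlgebra.ad_apply]⟩
    obtain ⟨a, ha⟩ : ∃ a : ℂ, ⁅Y, U⁆ = a • ZY := by
      have : ⁅Y, U⁆ ∈ span ℂ {ZY} := by
        rw [← hZYr]; exact ⟨U, by simp [LieAlgebra.ad_apply]⟩
      obtain ⟨a, ha⟩ := mem_span_singleton.mp this
      exact ⟨a, ha.symm⟩
    obtain ⟨b, hb⟩ : ∃ b : ℂ, ⁅X, V⁆ = b • Z := by
      have : ⁅X, V⁆ ∈ span ℂ {Z} := by
        rw [← hZr]; exact ⟨V, by simp [LieAlgebra.ad_apply]⟩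
      obtain ⟨b, hb⟩ := mem_span_singleton.mp this
      exact ⟨b, hb.symm⟩
    by_cases hab : a * b = 1
    · -- use U (or U + X)
      have ha0 : a ≠ 0 := fun h => by rw [h, zero_mul] at hab; exact one_ne_zero hab.symm
      obtain ⟨c, hc⟩ : ∃ c : ℂ, ⁅X, Y⁆ = c • Z := by
        have : ⁅X, Y⁆ ∈ span ℂ {Z} := by
          rw [← hZr]; exact ⟨Y, by simp [LieAlgebra.ad_apply]⟩
        obtain ⟨c, hc⟩ := mem_span_singleton.mp this
        exact ⟨c, hc.symm⟩
      by_cases hUD : U ∈ D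
      · -- use X + U
        set E : g := X + U with hE
        have hED : E ∉ D := hnotD hXD hUD
        have hv1 : ⁅E, X⁆ = (-1 : ℂ) • Z + (0 : ℂ) • ZY := by
          rw [hE, add_lie]
          have h1 : ⁅U, X⁆ = -Z := by rw [← lie_skew, hU]
          rw [lie_self, h1]
          simp
        have hv2 : ⁅E, Y⁆ = c • Z + (-a) • ZY := by
          rw [hE, add_lie, hc]
          have h1 : ⁅U, Y⁆ = -(a • ZY) := by rw [← lie_skew, ha]
          rw [h1]
          simp [neg_smul]
        have hind := pair_indep hZ0 hZY (α := -1) (β := 0) (γ := c) (δ := -a)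
          (by simp; exact fun h => ha0 h)
        rw [← hv1, ← hv2] at hind
        have hmem1 : ⁅E, X⁆ ∈ LinearMap.range (LieAlgebra.ad ℂ g E) :=
          ⟨X, by simp [LieAlgebra.ad_apply]⟩
        have hmem2 : ⁅E, Y⁆ ∈ LinearMap.range (LieAlgebra.ad ℂ g E) :=
          ⟨Y, by simp [LieAlgebra.ad_apply]⟩
        have := two_le_finrank_of_pair hmem1 hmem2 hind
        have h2 := (hmax E hED).2
        omega
      · have hv1 : ⁅U, X⁆ = (-1 : ℂ) • Z + (0 : ℂ) • ZY := by
          have h1 : ⁅U, X⁆ = -Z := by rw [← lie_skew, hU]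
          rw [h1]; simp
        have hv2 : ⁅U, Y⁆ = (0 : ℂ) • Z + (-a) • ZY := by
          have h1 : ⁅U, Y⁆ = -(a • ZY) := by rw [← lie_skew, ha]
          rw [h1]; simp [neg_smul]
        have hind := pair_indep hZ0 hZY (α := -1) (β := 0) (γ := 0) (δ := -a)
          (by simp; exact fun h => ha0 h)
        rw [← hv1, ← hv2] at hind
        have hmem1 : ⁅U, X⁆ ∈ LinearMap.range (LieAlgebra.ad ℂ g U) :=
          ⟨X, by simp [LieAlgebra.ad_apply]⟩
        have hmem2 : ⁅U, Y⁆ ∈ LinearMap.range (LieAlgebra.ad ℂ g U) :=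
          ⟨Y, by simp [LieAlgebra.ad_apply]⟩
        have := two_le_finrank_of_pair hmem1 hmem2 hind
        have h2 := (hmax U hUD).2
        omega
    · -- generic element X + t Y has rank ≥ 2
      obtain ⟨t, ht0, htD⟩ := hchoice Y
      set E : g := X + t • Y with hE
      have hv1 : ⁅E, U⁆ = (1 : ℂ) • Z + (t * a) • ZY := by
        rw [hE, add_lie, smul_lie, hU, ha, smul_smul]
        simp
      have hv2 : ⁅E, V⁆ = b • Z + t • ZY := by
        rw [hE, add_lie, smul_lie, hb, hV]
      have hdet : (1 : ℂ) * t - t * a * b ≠ 0 := by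
        intro h
        apply hab
        have : t * (1 - a * b) = 0 := by linear_combination h
        rcases mul_eq_zero.mp this with h' | h'
        · exact absurd h' ht0
        · linear_combination -h'
      have hind := pair_indep hZ0 hZY (α := 1) (β := t * a) (γ := b) (δ := t) hdet
      rw [← hv1, ← hv2] at hind
      have hmem1 : ⁅E, U⁆ ∈ LinearMap.range (LieAlgebra.ad ℂ g E) :=
        ⟨U, by simp [LieAlgebra.ad_apply]⟩
      have hmem2 : ⁅E, V⁆ ∈ LinearMap.range (LieAlgebra.ad ℂ g E) :=
        ⟨V, by simp [LieAlgebra.ad_apply]⟩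
      have := two_le_finrank_of_pair hmem1 hmem2 hind
      have h2 := (hmax E htD).2
      omega
  have hspan : ∀ A B : g, ⁅A, B⁆ ∈ span ℂ {Z} := by
    intro A B
    by_cases hA : A ∈ D
    · have h1 : X + A ∉ D := hnotD hXD hA
      have h2 : ⁅A, B⁆ = ⁅X + A, B⁆ - ⁅X, B⁆ := by rw [add_lie]; abel
      rw [h2]
      exact sub_mem (hspan' _ h1 B) (hspan' X hXD B)
    · exact hspan' A hA B
  -- the linear functional ℓ
  have hsing : LinearIndepOn ℂ id ({Z} : Set g) :=
    LinearIndepOn.singleton hZ0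
  set bb := Basis.extend hsing with hbb
  have hZmem : Z ∈ hsing.extend (Set.subset_univ ({Z} : Set g)) :=
    hsing.subset_extend _ rfl
  set ℓ : g →ₗ[ℂ] ℂ := bb.coord ⟨Z, hZmem⟩ with hℓ
  have hℓZ : ℓ Z = 1 := by
    have h1 : bb ⟨Z, hZmem⟩ = Z := Basis.extend_apply_self hsing ⟨Z, hZmem⟩
    have h2 : ℓ (bb ⟨Z, hZmem⟩) = 1 := by
      rw [hℓ, Basis.coord_apply, Basis.repr_self]
      simp
    rwa [h1] at h2
  set ω : g →ₗ[ℂ] g →ₗ[ℂ] ℂ := LinearMap.mk₂ ℂ (fun A B => ℓ ⁅A, B⁆)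
    (fun m1 m2 n => by simp only [add_lie, map_add])
    (fun c m n => by simp only [smul_lie, map_smul, smul_eq_mul])
    (fun m n1 n2 => by simp only [lie_add, map_add])
    (fun c m n => by simp only [lie_smul, map_smul, smul_eq_mul]) with hω
  have hωapp : ∀ A B : g, ω A B = ℓ ⁅A, B⁆ := fun A B => rfl
  have hωdef : ∀ A B : g, ⁅A, B⁆ = ω A B • Z := by
    intro A B
    obtain ⟨c, hc⟩ := mem_span_singleton.mp (hspan A B)
    rw [← hc, hωapp, ← hc, map_smul, smul_eq_mul, hℓZ, mul_one]
  have hωalt : ∀ v : g, ω v v = 0 := fun v => by rw [hωapp, lie_self, map_zero]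
  have hωskew := omega_skew ω hωalt
  set K : Submodule ℂ g := LinearMap.ker ω with hK
  have hmemK : ∀ v : g, v ∈ K ↔ ∀ w, ω v w = 0 := by
    intro v
    rw [hK, LinearMap.mem_ker]
    constructor
    · intro h w; rw [h]; rfl
    · intro h; ext w; exact h w
  have hZK : Z ∈ K := (hmemK Z).mpr fun w => by
    rw [hωapp]
    have hz : ⁅Z, w⁆ = 0 := by rw [← lie_skew, hcent w, neg_zero]
    rw [hz, map_zero]
  obtain ⟨C, hCK⟩ := Submodule.exists_isCompl K
  obtain ⟨p, q', bC, hC1, hC2, hC3, hC4⟩ := sb (finrank ℂ C) C le_rfl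
    (ω.compl₁₂ C.subtype C.subtype) (fun v => hωalt v)
  have hdec : ∀ u : g, ∃ k ∈ K, ∃ c ∈ C, u = k + c := by
    intro u
    have hu : u ∈ K ⊔ C := by rw [hCK.sup_eq_top]; trivial
    obtain ⟨k, hk, c, hc, h⟩ := mem_sup.mp hu
    exact ⟨k, hk, c, hc, h.symm⟩
  haveI hq' : IsEmpty (Fin q') := by
    refine ⟨fun k => ?_⟩
    have hwK : (bC (Sum.inr (Sum.inr k)) : g) ∈ K := by
      refine (hmemK _).mpr fun w => ?_
      obtain ⟨kk, hkk, cc, hcc, rfl⟩ := hdec w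
      rw [map_add]
      have h1 : ω (bC (Sum.inr (Sum.inr k)) : g) kk = 0 := by
        rw [hωskew, (hmemK kk).mp hkk _, neg_zero]
      have h2 : ω (bC (Sum.inr (Sum.inr k)) : g) cc = 0 := by
        rw [hωskew, show ω cc (bC (Sum.inr (Sum.inr k)) : g) = 0 from hC4 ⟨cc, hcc⟩ k, neg_zero]
      rw [h1, h2, add_zero]
    have hmem2 : (bC (Sum.inr (Sum.inr k)) : g) ∈ K ⊓ C :=
      ⟨hwK, (bC (Sum.inr (Sum.inr k))).2⟩
    rw [hCK.inf_eq_bot, Submodule.mem_bot] at hmem2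
    exact Basis.ne_zero bC (Sum.inr (Sum.inr k)) (Subtype.ext hmem2)
  have hωXU : ω X U = 1 := by rw [hωapp, hU, hℓZ]
  have hp : 1 ≤ p := by
    by_contra hp0
    have hp0' : p = 0 := by omega
    subst hp0'
    haveI : IsEmpty (Fin 0 ⊕ Fin 0 ⊕ Fin q') := by
      refine ⟨fun x => ?_⟩
      rcases x with x | x | x
      exacts [x.elim0, x.elim0, hq'.false x]
    have hC0 : finrank ℂ C = 0 := by
      rw [finrank_eq_card_basis bC, Fintype.card_eq_zero]
    have hCbot : C = ⊥ := Submodule.finrank_eq_zero.mp hC0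
    have hKtop : K = ⊤ := by
      have h := hCK.sup_eq_top
      rwa [hCbot, sup_bot_eq] at h
    have h0 : ω X U = 0 := (hmemK X).mp (hKtop ▸ mem_top) U
    rw [hωXU] at h0
    exact one_ne_zero h0
  -- basis of K containing Z
  set z : K := ⟨Z, hZK⟩ with hz
  have hz0 : z ≠ 0 := fun h => hZ0 (by simpa [hz, Submodule.mk_eq_zero] using h)
  have hzind : LinearIndependent ℂ (fun _ : Unit => z) := LinearIndependent.of_subsingleton () hz0
  set bz : Basis Unit ℂ (span ℂ (Set.range fun _ : Unit => z)) := Basis.span hzind with hbz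
  obtain ⟨K2, hK2⟩ := Submodule.exists_isCompl (span ℂ (Set.range fun _ : Unit => z))
  set q : ℕ := finrank ℂ K2 with hq
  set bK : Basis (Unit ⊕ Fin q) ℂ K :=
    ((bz.prod (finBasis ℂ K2)).map (Submodule.prodEquivOfIsCompl _ _ hK2)) with hbK
  have hbKz : (bK (Sum.inl ()) : g) = Z := by
    have h1 : bK (Sum.inl ()) = (bz () : K) := by
      simp [hbK, Basis.prod_apply]
    rw [h1, hbz, Basis.span_apply hzind ()]
  -- full basis
  set bG : Basis ((Fin p ⊕ Fin p ⊕ Fin q') ⊕ (Unit ⊕ Fin q)) ℂ g :=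
    (bC.prod bK).map (Submodule.prodEquivOfIsCompl C K hCK.symm) with hbG
  have hbGl : ∀ idx, bG (Sum.inl idx) = (bC idx : g) := fun idx => by
    simp [hbG, Basis.prod_apply]
  have hbGr : ∀ jdx, bG (Sum.inr jdx) = (bK jdx : g) := fun jdx => by
    simp [hbG, Basis.prod_apply]
  let e2 : ((Fin p ⊕ Fin p ⊕ Fin q') ⊕ (Unit ⊕ Fin q)) ≃ (Fin p ⊕ Fin p ⊕ Unit ⊕ Fin q) :=
    (Equiv.sumCongr (Equiv.sumCongr (Equiv.refl (Fin p))
        (Equiv.sumEmpty (Fin p) (Fin q'))) (Equiv.refl (Unit ⊕ Fin q))).trans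
      (Equiv.sumAssoc (Fin p) (Fin p) (Unit ⊕ Fin q))
  set b := bG.reindex e2 with hb
  have hbXi : ∀ i : Fin p, b (Sum.inl i) = (bC (Sum.inl i) : g) := by
    intro i
    rw [hb, Basis.reindex_apply, show e2.symm (Sum.inl i) = Sum.inl (Sum.inl i) from
      e2.symm_apply_eq.mpr (by simp [e2]), hbGl]
  have hbYj : ∀ j : Fin p, b (Sum.inr (Sum.inl j)) = (bC (Sum.inr (Sum.inl j)) : g) := by
    intro j
    rw [hb, Basis.reindex_apply, show e2.symm (Sum.inr (Sum.inl j)) = Sum.inl (Sum.inr (Sum.inl j))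
      from e2.symm_apply_eq.mpr (by simp [e2]), hbGl]
  have hbZi : b (Sum.inr (Sum.inr (Sum.inl ()))) = Z := by
    rw [hb, Basis.reindex_apply, show e2.symm (Sum.inr (Sum.inr (Sum.inl ()))) =
      Sum.inr (Sum.inl ()) from e2.symm_apply_eq.mpr (by simp [e2]), hbGr, hbKz]
  have hbWk : ∀ k : Fin q, b (Sum.inr (Sum.inr (Sum.inr k))) = (bK (Sum.inr k) : g) := by
    intro k
    rw [hb, Basis.reindex_apply, show e2.symm (Sum.inr (Sum.inr (Sum.inr k))) =
      Sum.inr (Sum.inr k) from e2.symm_apply_eq.mpr (by simp [e2]), hbGr]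
  refine ⟨p, q, hp, ?_, b, ?_, ?_, ?_, ?_, ?_, ?_, ?_⟩
  · rw [finrank_eq_card_basis b]
    simp only [Fintype.card_sum, Fintype.card_fin, Fintype.card_unit]
    omega
  · intro i
    rw [hbXi, hbYj, hbZi, hωdef]
    have h := hC1 i i
    rw [if_pos rfl] at h
    rw [show ω (bC (Sum.inl i) : g) (bC (Sum.inr (Sum.inl i)) : g) = 1 from h, one_smul]
  · intro i j hij
    rw [hbXi, hbYj, hωdef]
    have h := hC1 i j
    rw [if_neg hij] at h
    rw [show ω (bC (Sum.inl i) : g) (bC (Sum.inr (Sum.inl j)) : g) = 0 from h, zero_smul]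
  · intro i j
    rw [hbXi, hbXi, hωdef,
      show ω (bC (Sum.inl i) : g) (bC (Sum.inl j) : g) = 0 from hC2 i j, zero_smul]
  · intro i j
    rw [hbYj, hbYj, hωdef,
      show ω (bC (Sum.inr (Sum.inl i)) : g) (bC (Sum.inr (Sum.inl j)) : g) = 0 from hC3 i j,
      zero_smul]
  · intro i
    rw [hbZi]
    exact hcent _
  · intro i
    rw [hbZi]
    exact hcent _
  · intro x k
    rw [hbWk, hωdef]
    have h1 : ω x (bK (Sum.inr k) : g) = 0 := by
      rw [hωskew, (hmemK _).mp (bK (Sum.inr k)).2 x, neg_zero]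
    rw [h1, zero_smul]
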